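/- For every n ≥ 1 and every word v₁⋯vₙ of length n in the letters x and y, the Dynkin map is given in terms of permutations by: γ(v₁⋯vₙ) = ((−1)^{n−1}/n) · Σ_{k=0}^{n−1} (−1)^k Σ_{σ ∈ D_{1..k}} (vₙvₙ₋₁⋯v₁)^σ. -/

import Mathlib

noncomputable section

open scoped BigOperators

variable (K : Type) [Field K] [CharZero K]

/-- The free associative algebra `T = K⟨x,y⟩`, realized as the monoid algebra of the
free monoid on two generators. -/
abbrev T := MonoidAlgebra K (FreeMonoid (Fin 2))

/-- The word `v₁⋯vₙ` (a list of letters) as an element of `T`. -/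
def word (l : List (Fin 2)) : T K := MonoidAlgebra.single (FreeMonoid.ofList l) 1

/-- The generator `x`. -/
def X : T K := word K [0]

/-- The generator `y`. -/
def Y : T K := word K [1]

/-- Right-nested bracket `[v₁,[v₂,…,[vₙ₋₁,vₙ]…]]` of a word. -/
def brList : List (Fin 2) → T K
  | [] => 0
  | [v] => word K [v]
  | v :: rest => word K [v] * brList rest - brList rest * word K [v]

/-- The Dynkin map `γ : T → T`, sending a word `v₁⋯vₙ` to
`(1/n)[v₁,[v₂,…,[vₙ₋₁,vₙ]…]]` (and `1 ↦ 0`). -/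
def dynkin : T K →ₗ[K] T K :=
  (Finsupp.linearCombination K fun w : FreeMonoid (Fin 2) =>
    ((w.toList.length : K)⁻¹) • brList K w.toList) ∘ₗ (MonoidAlgebra.coeffLinearEquiv K).toLinearMap

attribute [local instance 100] LieRing.ofAssociativeRing

/-- The free Lie algebra `L` on `x, y`, as the Lie subalgebra of `T` generated by `x` and `y`. -/
def L : LieSubalgebra K (T K) := LieSubalgebra.lieSpan K (T K) {X K, Y K}

/-- The degree-`n` homogeneous component `T_n` of `T`, spanned by the words of length `n`. -/
def homog (n : ℕ) : Submodule K (T K) :=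
  Submodule.span K { t | ∃ l : List (Fin 2), l.length = n ∧ t = word K l }

/-- The value `σ(i)` of a permutation of `{0,…,n-1}` on a natural number (junk value `0`
outside the range). -/
def permVal {n : ℕ} (σ : Equiv.Perm (Fin n)) (i : ℕ) : ℕ :=
  if h : i < n then (σ ⟨i, h⟩ : ℕ) else 0

/-- The (0-indexed) descent set of a permutation: positions `i ∈ {0,…,n-2}` with
`σ(i) > σ(i+1)`. -/
def descSet {n : ℕ} (σ : Equiv.Perm (Fin n)) : Finset ℕ :=
  (Finset.range (n - 1)).filter fun i => permVal σ (i + 1) < permVal σ i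

/-- The number of descents of a permutation. -/
def descNum {n : ℕ} (σ : Equiv.Perm (Fin n)) : ℕ := (descSet σ).card

/-- `DSet n k` is the set of permutations of `{0,…,n-1}` whose descent set is exactly
the first `k` positions (this is `D_{1..k}` of the paper, in 0-indexed form). -/
def DSet (n k : ℕ) : Finset (Equiv.Perm (Fin n)) :=
  Finset.univ.filter fun σ => descSet σ = Finset.range k

/-- The Eulerian coefficient `c_σ = (-1)^{d(σ)} (binom (n-1) (d σ))⁻¹`. -/
def eulCoeff {n : ℕ} (σ : Equiv.Perm (Fin n)) : K :=
  (-1 : K) ^ descNum σ * ((Nat.choose (n - 1) (descNum σ) : K))⁻¹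

/-- The degree-`n` Eulerian idempotent applied to the word `w₁⋯wₙ` given by
`v : Fin n → Fin 2`: `eₙ(w) = Σ_σ c_σ w^σ`. -/
def eul (n : ℕ) (v : Fin n → Fin 2) : T K :=
  ∑ σ : Equiv.Perm (Fin n), eulCoeff K σ • word K (List.ofFn fun i => v (σ i))

/-- The `a`-part of an element of `T`: the linear map sending a word `a·w ↦ w` and
any word not starting with the letter `a` (or the empty word) to `0`.  For `p` with zero
constant term, `p = x·(letterPart 0 p) + y·(letterPart 1 p)`. -/
def letterPart (a : Fin 2) : T K →ₗ[K] T K :=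
  (Finsupp.linearCombination K fun w : FreeMonoid (Fin 2) =>
    match w.toList with
    | [] => 0
    | b :: rest => if b = a then word K rest else 0) ∘ₗ
    (MonoidAlgebra.coeffLinearEquiv K).toLinearMap

/-- The algebra endomorphism `s : T → T` with `s(x) = -y`, `s(y) = -x`. -/
def sMap : T K →ₐ[K] T K :=
  MonoidAlgebra.lift K (T K) (FreeMonoid (Fin 2))
    (FreeMonoid.lift fun a : Fin 2 => if a = 0 then -(Y K) else -(X K))

set_option linter.unusedSectionVars false

lemma word_append (l₁ l₂ : List (Fin 2)) : word K (l₁ ++ l₂) = word K l₁ * word K l₂ := by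
  unfold word; rw [MonoidAlgebra.single_mul_single, one_mul]; rfl

lemma brList_cons (a b : Fin 2) (l : List (Fin 2)) :
    brList K (a :: b :: l) = word K [a] * brList K (b :: l) - brList K (b :: l) * word K [a] := rfl

def trues (m : ℕ) (c : Fin m → Bool) : List (Fin m) := (List.finRange m).filter c

def falses (m : ℕ) (c : Fin m → Bool) : List (Fin m) :=
  (List.finRange m).filter (fun i => !(c i))

def maskL (m : ℕ) (c : Fin m → Bool) : List (Fin (m+1)) :=
  ((trues m c).map Fin.castSucc) ++ Fin.last m :: (((falses m c).reverse).map Fin.castSucc)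

lemma trues_cons (m : ℕ) (b : Bool) (c : Fin m → Bool) :
    trues (m+1) (Fin.cons b c) =
      (if b then [(0 : Fin (m+1))] else []) ++ (trues m c).map Fin.succ := by
  unfold trues
  rw [List.finRange_succ, List.filter_cons, List.filter_map]
  have h1 : (Fin.cons b c : Fin (m+1) → Bool) ∘ Fin.succ = c := by
    funext i; simp [Fin.cons_succ]
  rw [h1]; simp [Fin.cons_zero]; cases b <;> simp

lemma falses_cons (m : ℕ) (b : Bool) (c : Fin m → Bool) :
    falses (m+1) (Fin.cons b c) =
      (if b then [] else [(0 : Fin (m+1))]) ++ (falses m c).map Fin.succ := by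
  unfold falses
  rw [List.finRange_succ, List.filter_cons, List.filter_map]
  have h1 : (fun i => !(Fin.cons b c : Fin (m+1) → Bool) i) ∘ Fin.succ = fun i => !(c i) := by
    funext i; simp [Fin.cons_succ]
  rw [h1]; cases b <;> simp

-- new part

lemma maskL_cons_true (m : ℕ) (c : Fin m → Bool) (v : Fin (m+2) → Fin 2) :
    (maskL (m+1) (Fin.cons true c)).map v = v 0 :: (maskL m c).map (v ∘ Fin.succ) := by
  unfold maskL
  rw [trues_cons, falses_cons]
  simp only [if_true]
  simp [List.map_map, Fin.succ_last, Function.comp]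
  have h2 : v ∘ Fin.castSucc ∘ Fin.succ = (v ∘ Fin.succ) ∘ Fin.castSucc := by
    funext i; simp [← Fin.succ_castSucc]
  rw [h2]

lemma maskL_cons_false (m : ℕ) (c : Fin m → Bool) (v : Fin (m+2) → Fin 2) :
    (maskL (m+1) (Fin.cons false c)).map v = (maskL m c).map (v ∘ Fin.succ) ++ [v 0] := by
  unfold maskL
  rw [trues_cons, falses_cons]
  simp only [if_neg Bool.false_ne_true]
  simp [List.map_map, Fin.succ_last, Function.comp]
  have h2 : v ∘ Fin.castSucc ∘ Fin.succ = (v ∘ Fin.succ) ∘ Fin.castSucc := by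
    funext i; simp [← Fin.succ_castSucc]
  rw [h2]

lemma step1 (m : ℕ) (v : Fin (m+1) → Fin 2) :
    brList K (List.ofFn v) =
      ∑ c : Fin m → Bool, ((-1 : K) ^ (falses m c).length) • word K ((maskL m c).map v) := by
  induction m with
  | zero =>
    rw [show (List.ofFn v) = [v 0] by simp [List.ofFn_succ]]
    rw [Fintype.sum_unique]
    simp [trues, falses, maskL, brList]
  | succ m ih =>
    have h1 : List.ofFn (v ∘ Fin.succ) =
        (v ∘ Fin.succ) 0 :: List.ofFn (fun i => (v ∘ Fin.succ) i.succ) := List.ofFn_succ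
    have h0 : List.ofFn v = v 0 :: List.ofFn (v ∘ Fin.succ) := by rw [List.ofFn_succ]; rfl
    have hlhs : brList K (List.ofFn v) =
        word K [v 0] * brList K (List.ofFn (v ∘ Fin.succ)) -
          brList K (List.ofFn (v ∘ Fin.succ)) * word K [v 0] := by
      rw [h0, h1, brList_cons, ← h1]
    rw [hlhs, ih]
    rw [← (Fin.consEquiv (fun _ : Fin (m+1) => Bool)).sum_comp
      (fun c => ((-1 : K) ^ (falses (m+1) c).length) • word K ((maskL (m+1) c).map v)),
      Fintype.sum_prod_type]
    have hce : ⇑(Fin.consEquiv (fun _ : Fin (m+1) => Bool)) =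
        fun p : Bool × (Fin m → Bool) => Fin.cons p.1 p.2 := rfl
    simp only [hce]
    rw [Fintype.sum_bool]
    have hT : (∑ c : Fin m → Bool,
        ((-1 : K) ^ (falses (m+1) (Fin.cons true c)).length) •
          word K ((maskL (m+1) (Fin.cons true c)).map v)) =
        word K [v 0] * ∑ c : Fin m → Bool,
          ((-1 : K) ^ (falses m c).length) • word K ((maskL m c).map (v ∘ Fin.succ)) := by
      rw [Finset.mul_sum]
      apply Finset.sum_congr rfl
      intro c _
      rw [maskL_cons_true, falses_cons]
      rw [show (v 0 :: (maskL m c).map (v ∘ Fin.succ)) =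
        [v 0] ++ (maskL m c).map (v ∘ Fin.succ) from rfl, word_append, mul_smul_comm]
      simp
    have hF : (∑ c : Fin m → Bool,
        ((-1 : K) ^ (falses (m+1) (Fin.cons false c)).length) •
          word K ((maskL (m+1) (Fin.cons false c)).map v)) =
        -((∑ c : Fin m → Bool,
          ((-1 : K) ^ (falses m c).length) • word K ((maskL m c).map (v ∘ Fin.succ))) *
            word K [v 0]) := by
      rw [Finset.sum_mul, ← Finset.sum_neg_distrib]
      apply Finset.sum_congr rfl
      intro c _
      rw [maskL_cons_false, falses_cons, word_append, smul_mul_assoc]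
      simp [pow_succ]
    rw [hT, hF, sub_eq_add_neg]


-- sorted list helpers

lemma list_eq_of_sorted_lt {α : Type*} [LinearOrder α] {l₁ l₂ : List α}
    (h₁ : l₁.Pairwise (· < ·)) (h₂ : l₂.Pairwise (· < ·))
    (h : ∀ a, a ∈ l₁ ↔ a ∈ l₂) : l₁ = l₂ := by
  haveI : IsAntisymm α (· < ·) := ⟨fun a b hab hba => absurd hba (lt_asymm hab)⟩
  have n₁ : l₁.Nodup := h₁.imp (fun hab => ne_of_lt hab)
  have n₂ : l₂.Nodup := h₂.imp (fun hab => ne_of_lt hab)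
  exact List.Perm.eq_of_pairwise (fun a b _ _ hab hba => absurd hba (lt_asymm hab)) h₁ h₂ ((List.perm_ext_iff_of_nodup n₁ n₂).2 h)

lemma list_eq_of_sorted_gt {α : Type*} [LinearOrder α] {l₁ l₂ : List α}
    (h₁ : l₁.Pairwise (· > ·)) (h₂ : l₂.Pairwise (· > ·))
    (h : ∀ a, a ∈ l₁ ↔ a ∈ l₂) : l₁ = l₂ := by
  haveI : IsAntisymm α (· > ·) := ⟨fun a b hab hba => absurd hba (lt_asymm hab)⟩
  have n₁ : l₁.Nodup := h₁.imp (fun hab => ne_of_gt hab)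
  have n₂ : l₂.Nodup := h₂.imp (fun hab => ne_of_gt hab)
  exact List.Perm.eq_of_pairwise (fun a b _ _ hab hba => absurd hba (lt_asymm hab)) h₁ h₂ ((List.perm_ext_iff_of_nodup n₁ n₂).2 h)

-- lengths and membership

lemma trues_length_le (m : ℕ) (c : Fin m → Bool) : (trues m c).length ≤ m := by
  simpa [trues] using List.length_filter_le c (List.finRange m)

lemma trues_add_falses (m : ℕ) (c : Fin m → Bool) :
    (trues m c).length + (falses m c).length = m := by
  have h := List.length_eq_length_filter_add (l := List.finRange m) c
  simp only [List.length_finRange] at h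
  simp only [trues, falses]
  omega

lemma maskL_length (m : ℕ) (c : Fin m → Bool) : (maskL m c).length = m + 1 := by
  have h := trues_add_falses m c
  simp [maskL]
  omega

lemma mem_trues {m : ℕ} {c : Fin m → Bool} {i : Fin m} : i ∈ trues m c ↔ c i = true := by
  simp [trues, List.mem_filter]

lemma mem_falses {m : ℕ} {c : Fin m → Bool} {i : Fin m} : i ∈ falses m c ↔ c i = false := by
  simp [falses, List.mem_filter]

lemma trues_pairwise (m : ℕ) (c : Fin m → Bool) : (trues m c).Pairwise (· < ·) :=
  (List.pairwise_lt_finRange m).filter _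

lemma falses_pairwise (m : ℕ) (c : Fin m → Bool) : (falses m c).Pairwise (· < ·) :=
  (List.pairwise_lt_finRange m).filter _

lemma maskL_nodup (m : ℕ) (c : Fin m → Bool) : (maskL m c).Nodup := by
  have hA : ((trues m c).map Fin.castSucc).Nodup :=
    ((List.nodup_finRange m).filter _).map (Fin.castSucc_injective m)
  have hB : (((falses m c).reverse).map Fin.castSucc).Nodup :=
    (List.nodup_reverse.2 ((List.nodup_finRange m).filter _)).map (Fin.castSucc_injective m)
  refine List.Nodup.append hA ?_ ?_
  · rw [List.nodup_cons]
    refine ⟨?_, hB⟩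
    intro hmem
    obtain ⟨a, _, ha⟩ := List.mem_map.1 hmem
    exact absurd ha (ne_of_lt (Fin.castSucc_lt_last a))
  · intro x hx hy
    obtain ⟨a, ha, rfl⟩ := List.mem_map.1 hx
    rcases List.mem_cons.1 hy with h | h
    · exact absurd h (ne_of_lt (Fin.castSucc_lt_last a))
    · obtain ⟨b, hb, hba⟩ := List.mem_map.1 h
      have hab : a = b := (Fin.castSucc_injective m hba.symm)
      subst hab
      have h1 := mem_trues.1 ha
      have h2 := mem_falses.1 (List.mem_reverse.1 hb)
      simp [h1] at h2

lemma maskL_mem (m : ℕ) (c : Fin m → Bool) (a : Fin (m+1)) : a ∈ maskL m c := by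
  unfold maskL
  rcases eq_or_ne a (Fin.last m) with rfl | h
  · exact List.mem_append_right _ List.mem_cons_self
  · rw [← Fin.castSucc_castPred a h]
    by_cases hc : c (a.castPred h) = true
    · exact List.mem_append_left _ (List.mem_map_of_mem (mem_trues.2 hc))
    · refine List.mem_append_right _ (List.mem_cons_of_mem _ ?_)
      exact List.mem_map_of_mem (List.mem_reverse.2 (mem_falses.2 (by simpa using hc)))

def maskEquiv (m : ℕ) (c : Fin m → Bool) : Fin (m+1) ≃ Fin (m+1) :=
  (finCongr (maskL_length m c).symm).trans
    (List.Nodup.getEquivOfForallMemList _ (maskL_nodup m c) (maskL_mem m c))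

lemma maskEquiv_apply (m : ℕ) (c : Fin m → Bool) (i : Fin (m+1)) :
    maskEquiv m c i = (maskL m c)[(i:ℕ)]'(by rw [maskL_length]; exact i.isLt) := by
  simp [maskEquiv, List.Nodup.getEquivOfForallMemList]

def maskPerm (m : ℕ) (c : Fin m → Bool) : Equiv.Perm (Fin (m+1)) :=
  (maskEquiv m c).trans (Fin.revPerm)

lemma maskPerm_apply (m : ℕ) (c : Fin m → Bool) (i : Fin (m+1)) :
    maskPerm m c i = (maskEquiv m c i).rev := rfl

lemma maskEquiv_lt (m : ℕ) (c : Fin m → Bool) (i : Fin (m+1))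
    (h : (i:ℕ) < (trues m c).length) :
    maskEquiv m c i = Fin.castSucc ((trues m c)[(i:ℕ)]'h) := by
  rw [maskEquiv_apply]
  unfold maskL
  rw [List.getElem_append_left (by simpa using h)]
  simp

lemma maskEquiv_eq (m : ℕ) (c : Fin m → Bool) (i : Fin (m+1))
    (h : (i:ℕ) = (trues m c).length) : maskEquiv m c i = Fin.last m := by
  rw [maskEquiv_apply]
  unfold maskL
  rw [List.getElem_append_right (by simp [h])]
  simp [h]

lemma maskEquiv_gt (m : ℕ) (c : Fin m → Bool) (i : Fin (m+1))
    (h : (trues m c).length < (i:ℕ)) :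
    maskEquiv m c i = Fin.castSucc (((falses m c).reverse)[(i:ℕ) - (trues m c).length - 1]'
      (by
        have h1 := trues_add_falses m c
        have h2 := i.isLt
        simp only [List.length_reverse]
        omega)) := by
  rw [maskEquiv_apply]
  unfold maskL
  rw [List.getElem_append_right (by simp; omega)]
  have h3 : (i:ℕ) - ((trues m c).map Fin.castSucc).length = ((i:ℕ) - (trues m c).length - 1) + 1 := by
    simp; omega
  simp only [h3, List.getElem_cons_succ, List.getElem_map]

lemma maskEquiv_strict_lt (m : ℕ) (c : Fin m → Bool) (i j : Fin (m+1))
    (hij : i < j) (hj : (j:ℕ) ≤ (trues m c).length) :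
    maskEquiv m c i < maskEquiv m c j := by
  have hij' : (i:ℕ) < (j:ℕ) := hij
  rcases eq_or_lt_of_le hj with hj' | hj'
  · rw [maskEquiv_eq m c j hj', maskEquiv_lt m c i (by omega)]
    exact Fin.castSucc_lt_last _
  · rw [maskEquiv_lt m c i (by omega), maskEquiv_lt m c j hj']
    rw [Fin.castSucc_lt_castSucc_iff]
    exact List.pairwise_iff_getElem.1 (trues_pairwise m c) _ _ _ _ hij'

lemma maskEquiv_strict_gt (m : ℕ) (c : Fin m → Bool) (i j : Fin (m+1))
    (hi : (trues m c).length ≤ (i:ℕ)) (hij : i < j) :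
    maskEquiv m c j < maskEquiv m c i := by
  have hij' : (i:ℕ) < (j:ℕ) := hij
  rcases eq_or_lt_of_le hi with hi' | hi'
  · rw [maskEquiv_eq m c i hi'.symm, maskEquiv_gt m c j (by omega)]
    exact Fin.castSucc_lt_last _
  · rw [maskEquiv_gt m c i hi', maskEquiv_gt m c j (by omega)]
    rw [Fin.castSucc_lt_castSucc_iff]
    have hp : ((falses m c).reverse).Pairwise (· > ·) := by
      rw [List.pairwise_reverse]
      exact falses_pairwise m c
    exact List.pairwise_iff_getElem.1 hp _ _ _ _ (by omega)

lemma maskPerm_lt_iff (m : ℕ) (c : Fin m → Bool) (i : ℕ) (him : i < m) :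
    (permVal (maskPerm m c) (i+1) < permVal (maskPerm m c) i) ↔ i < (trues m c).length := by
  have h1 : i < m + 1 := by omega
  have h2 : i + 1 < m + 1 := by omega
  rw [permVal, permVal, dif_pos h1, dif_pos h2]
  have key : maskPerm m c ⟨i+1, h2⟩ < maskPerm m c ⟨i, h1⟩ ↔ i < (trues m c).length := by
    rw [maskPerm_apply, maskPerm_apply, Fin.rev_lt_rev]
    constructor
    · intro hlt
      by_contra hik
      push_neg at hik
      exact absurd hlt (asymm (maskEquiv_strict_gt m c ⟨i, h1⟩ ⟨i+1, h2⟩ hik (Nat.lt_succ_self i)))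
    · intro hik
      exact maskEquiv_strict_lt m c ⟨i, h1⟩ ⟨i+1, h2⟩ (Nat.lt_succ_self i) hik
  rw [← Fin.lt_def]
  exact key

lemma descSet_maskPerm (m : ℕ) (c : Fin m → Bool) :
    descSet (maskPerm m c) = Finset.range (trues m c).length := by
  have hk : (trues m c).length ≤ m := trues_length_le m c
  ext i
  simp only [descSet, Finset.mem_filter, Finset.mem_range, Nat.add_sub_cancel]
  constructor
  · rintro ⟨him, hlt⟩
    exact (maskPerm_lt_iff m c i him).1 hlt
  · intro hik
    exact ⟨by omega, (maskPerm_lt_iff m c i (by omega)).2 hik⟩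

lemma descNum_maskPerm (m : ℕ) (c : Fin m → Bool) :
    descNum (maskPerm m c) = (trues m c).length := by
  simp [descNum, descSet_maskPerm]

lemma maskPerm_injective (m : ℕ) : Function.Injective (maskPerm m) := by
  intro c c' h
  have hg : ∀ i : Fin (m+1), maskEquiv m c i = maskEquiv m c' i := by
    intro i
    have h1 : maskPerm m c i = maskPerm m c' i := by rw [h]
    rw [maskPerm_apply, maskPerm_apply] at h1
    exact Fin.rev_injective h1
  have hk : (trues m c).length = (trues m c').length := by
    rw [← descNum_maskPerm m c, ← descNum_maskPerm m c', h]
  have hL : maskL m c = maskL m c' := by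
    apply List.ext_getElem (by rw [maskL_length, maskL_length])
    intro n h1 h2
    have h3 := hg ⟨n, by rw [maskL_length] at h1; exact h1⟩
    rw [maskEquiv_apply, maskEquiv_apply] at h3
    exact h3
  have htr : trues m c = trues m c' := by
    have h1 : (trues m c).map Fin.castSucc = (trues m c').map Fin.castSucc := by
      have t1 := List.take_left (l₁ := (trues m c).map Fin.castSucc)
        (l₂ := Fin.last m :: (((falses m c).reverse).map Fin.castSucc))
      have t2 := List.take_left (l₁ := (trues m c').map Fin.castSucc)
        (l₂ := Fin.last m :: (((falses m c').reverse).map Fin.castSucc))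
      have hlen : ((trues m c).map Fin.castSucc).length = ((trues m c').map Fin.castSucc).length := by
        simp [hk]
      rw [← t1, ← t2, ← hlen]
      show (maskL m c).take _ = (maskL m c').take _
      rw [hL]
    exact List.map_injective_iff.2 (Fin.castSucc_injective m) h1
  funext i
  cases hci : c i with
  | true =>
    have : i ∈ trues m c' := htr ▸ mem_trues.2 hci
    exact (mem_trues.1 this).symm
  | false =>
    cases hci' : c' i with
    | true =>
      have : i ∈ trues m c := htr ▸ mem_trues.2 hci'
      exact absurd (mem_trues.1 this) (by simp [hci])
    | false => rfl

lemma maskPerm_surj (m : ℕ) (σ : Equiv.Perm (Fin (m+1))) (k : ℕ) (hkm : k ≤ m)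
    (hσ : descSet σ = Finset.range k) : ∃ c, maskPerm m c = σ := by
  classical
  set ρ : Equiv.Perm (Fin (m+1)) := σ.trans (Fin.revPerm) with hρdef
  have hρ : ∀ j, ρ j = (σ j).rev := fun _ => rfl
  have hρeq : ∀ (j : ℕ) (hj : j < m+1) (x : Fin (m+1)),
      ρ ⟨j, hj⟩ = x ↔ ((ρ.symm x : Fin (m+1)) : ℕ) = j := by
    intro j hj x
    constructor
    · intro he; rw [← he, Equiv.symm_apply_apply]
    · intro he
      have h2 : ρ.symm x = ⟨j, hj⟩ := Fin.ext he
      rw [← h2, Equiv.apply_symm_apply]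
  have hd : ∀ i : ℕ, (him : i < m) → ((i < k) ↔ ρ ⟨i, by omega⟩ < ρ ⟨i+1, by omega⟩) := by
    intro i him
    have hmem := Finset.ext_iff.1 hσ i
    simp only [descSet, Finset.mem_filter, Finset.mem_range, Nat.add_sub_cancel] at hmem
    rw [permVal, permVal, dif_pos (show i < m+1 by omega),
      dif_pos (show i+1 < m+1 by omega)] at hmem
    constructor
    · intro hik
      have h2 := (hmem.2 hik).2
      show ρ ⟨i, _⟩ < ρ ⟨i+1, _⟩
      rw [hρ, hρ, Fin.rev_lt_rev, Fin.lt_def]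
      exact h2
    · intro hlt
      apply hmem.1
      refine ⟨him, ?_⟩
      rw [hρ, hρ, Fin.rev_lt_rev, Fin.lt_def] at hlt
      exact hlt
  have hd' : ∀ i : ℕ, (him : i < m) → (hki : k ≤ i) → ρ ⟨i+1, by omega⟩ < ρ ⟨i, by omega⟩ := by
    intro i him hki
    have h1 : ¬ (ρ ⟨i, by omega⟩ < ρ ⟨i+1, by omega⟩) := by
      intro hc
      exact absurd ((hd i him).2 hc) (by omega)
    have hne : ρ ⟨i+1, by omega⟩ ≠ ρ ⟨i, by omega⟩ := by
      intro hc
      have h2 := ρ.injective hc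
      simp [Fin.ext_iff] at h2
    exact lt_of_le_of_ne (le_of_not_gt h1) hne
  have hinc : ∀ j : ℕ, (hj : j ≤ k) → ∀ i : ℕ, (hi : i < j) →
      ρ ⟨i, by omega⟩ < ρ ⟨j, by omega⟩ := by
    intro j
    induction j with
    | zero => intro _ i hi; omega
    | succ j ih =>
      intro hj i hi
      have hstep : ρ ⟨j, by omega⟩ < ρ ⟨j+1, by omega⟩ := (hd j (by omega)).1 (by omega)
      rcases Nat.lt_or_ge i j with h' | h'
      · exact lt_trans (ih (by omega) i h') hstep
      · have hij : i = j := by omega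
        subst hij
        exact hstep
  have hdec : ∀ j : ℕ, (hj : j ≤ m) → ∀ i : ℕ, (hki : k ≤ i) → (hi : i < j) →
      ρ ⟨j, by omega⟩ < ρ ⟨i, by omega⟩ := by
    intro j
    induction j with
    | zero => intro _ i _ hi; omega
    | succ j ih =>
      intro hj i hki hi
      have hstep : ρ ⟨j+1, by omega⟩ < ρ ⟨j, by omega⟩ := hd' j (by omega) (by omega)
      rcases Nat.lt_or_ge i j with h' | h'
      · exact lt_trans hstep (ih (by omega) i hki h')
      · have hij : i = j := by omega
        subst hij
        exact hstep
  have hmax : ρ ⟨k, by omega⟩ = Fin.last m := by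
    refine le_antisymm (Fin.le_last _) ?_
    have hj₀ : ρ (ρ.symm (Fin.last m)) = Fin.last m := ρ.apply_symm_apply _
    have heta : ∀ (h : ((ρ.symm (Fin.last m) : Fin (m+1)) : ℕ) < m + 1),
        (⟨((ρ.symm (Fin.last m) : Fin (m+1)) : ℕ), h⟩ : Fin (m+1)) = ρ.symm (Fin.last m) :=
      fun h => Fin.ext rfl
    rcases Nat.lt_trichotomy ((ρ.symm (Fin.last m) : Fin (m+1)) : ℕ) k with h' | h' | h'
    · have h2 := hinc k (le_refl k) _ h'
      rw [heta, hj₀] at h2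
      exact le_of_lt h2
    · have h2 : ρ ⟨k, by omega⟩ = Fin.last m := by
        have h3 : (⟨k, by omega⟩ : Fin (m+1)) = ρ.symm (Fin.last m) := Fin.ext h'.symm
        rw [h3, Equiv.apply_symm_apply]
      exact le_of_eq h2.symm
    · have h2 := hdec _ (by omega : ((ρ.symm (Fin.last m) : Fin (m+1)) : ℕ) ≤ m) k (le_refl k) h'
      rw [heta, hj₀] at h2
      exact le_of_lt h2
  have hsymm_last : ((ρ.symm (Fin.last m) : Fin (m+1)) : ℕ) = k := by
    rw [← hmax, Equiv.symm_apply_apply]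
  let c : Fin m → Bool := fun i => decide (((ρ.symm i.castSucc : Fin (m+1)) : ℕ) < k)
  have hc : ∀ i : Fin m, c i = true ↔ ((ρ.symm i.castSucc : Fin (m+1)) : ℕ) < k := by
    intro i; simp [c]
  refine ⟨c, ?_⟩
  set M : List (Fin (m+1)) := List.ofFn (fun j => ρ j) with hMdef
  have hMlen : M.length = m + 1 := by simp [hMdef]
  have hMget : ∀ (j : ℕ) (hj : j < m+1), M[j]'(by rw [hMlen]; exact hj) = ρ ⟨j, hj⟩ := by
    intro j hj
    simp only [hMdef, List.getElem_ofFn]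
  have hM1 : (trues m c).map Fin.castSucc = M.take k := by
    apply list_eq_of_sorted_lt
    · rw [List.pairwise_map]
      exact (trues_pairwise m c).imp (fun hab => Fin.castSucc_lt_castSucc_iff.2 hab)
    · rw [List.pairwise_iff_getElem]
      intro i j hi hj hij
      rw [List.length_take, hMlen] at hi hj
      rw [List.getElem_take, List.getElem_take, hMget i (by omega), hMget j (by omega)]
      exact hinc j (by omega) i hij
    · intro a
      simp only [List.mem_map]
      constructor
      · rintro ⟨i, hi, rfl⟩
        have hval := (hc i).1 (mem_trues.1 hi)
        rw [List.mem_iff_getElem]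
        have hvm := (ρ.symm i.castSucc).isLt
        refine ⟨((ρ.symm i.castSucc : Fin (m+1)) : ℕ), ?_, ?_⟩
        · rw [List.length_take, hMlen]; omega
        · rw [List.getElem_take, hMget _ (by omega)]
          rw [hρeq]
      · intro ha
        rw [List.mem_iff_getElem] at ha
        obtain ⟨n, hn, hna⟩ := ha
        rw [List.length_take, hMlen] at hn
        have hnk : n < k := by omega
        rw [List.getElem_take, hMget n (by omega)] at hna
        have hsymm : ((ρ.symm a : Fin (m+1)) : ℕ) = n := (hρeq n (by omega) a).1 hna
        have hane : a ≠ Fin.last m := by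
          intro he
          rw [he, hsymm_last] at hsymm
          omega
        refine ⟨a.castPred hane, ?_, Fin.castSucc_castPred a hane⟩
        apply mem_trues.2
        apply (hc _).2
        rw [Fin.castSucc_castPred, hsymm]
        exact hnk
  have hM2 : ((falses m c).reverse).map Fin.castSucc = M.drop (k+1) := by
    apply list_eq_of_sorted_gt
    · rw [List.pairwise_map]
      have hp : ((falses m c).reverse).Pairwise (· > ·) := by
        rw [List.pairwise_reverse]
        exact falses_pairwise m c
      exact hp.imp (fun hab => Fin.castSucc_lt_castSucc_iff.2 hab)
    · rw [List.pairwise_iff_getElem]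
      intro i j hi hj hij
      rw [List.length_drop, hMlen] at hi hj
      rw [List.getElem_drop, List.getElem_drop, hMget _ (by omega), hMget _ (by omega)]
      exact hdec (k+1+j) (by omega) (k+1+i) (by omega) (by omega)
    · intro a
      simp only [List.mem_map]
      constructor
      · rintro ⟨i, hi, rfl⟩
        have hval : ¬ (((ρ.symm i.castSucc : Fin (m+1)) : ℕ) < k) := by
          have h2 := mem_falses.1 (List.mem_reverse.1 hi)
          intro hlt
          rw [(hc i).2 hlt] at h2
          exact Bool.noConfusion h2
        have hne : ((ρ.symm i.castSucc : Fin (m+1)) : ℕ) ≠ k := by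
          intro he
          have h2 : ρ.symm i.castSucc = ρ.symm (Fin.last m) := Fin.ext (by rw [he, hsymm_last])
          have h3 := ρ.symm.injective h2
          exact absurd h3 (ne_of_lt (Fin.castSucc_lt_last i))
        have hvm := (ρ.symm i.castSucc).isLt
        rw [List.mem_iff_getElem]
        refine ⟨((ρ.symm i.castSucc : Fin (m+1)) : ℕ) - (k+1), ?_, ?_⟩
        · rw [List.length_drop, hMlen]; omega
        · rw [List.getElem_drop, hMget _ (by omega)]
          rw [hρeq]
          omega
      · intro ha
        rw [List.mem_iff_getElem] at ha
        obtain ⟨n, hn, hna⟩ := ha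
        rw [List.length_drop, hMlen] at hn
        rw [List.getElem_drop, hMget _ (by omega)] at hna
        have hsymm : ((ρ.symm a : Fin (m+1)) : ℕ) = k+1+n := (hρeq _ (by omega) a).1 hna
        have hane : a ≠ Fin.last m := by
          intro he
          rw [he, hsymm_last] at hsymm
          omega
        refine ⟨a.castPred hane, ?_, Fin.castSucc_castPred a hane⟩
        apply List.mem_reverse.2
        apply mem_falses.2
        have h2 : ¬ (c (a.castPred hane) = true) := by
          rw [hc, Fin.castSucc_castPred, hsymm]
          omega
        cases hcc : c (a.castPred hane) with
        | true => exact absurd hcc h2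
        | false => rfl
  have hkM : k < M.length := by rw [hMlen]; omega
  have hMk : M[k]'hkM = Fin.last m := by
    rw [hMget k (by omega)]
    exact hmax
  have hM : maskL m c = M := by
    unfold maskL
    rw [hM1, hM2]
    conv_rhs => rw [← List.take_append_drop k M]
    congr 1
    rw [List.drop_eq_getElem_cons hkM, hMk]
  apply Equiv.ext
  intro j
  have h1 : maskEquiv m c j = ρ j := by
    rw [maskEquiv_apply]
    rw [List.getElem_of_eq hM]
    rw [hMget _ j.isLt]
  rw [maskPerm_apply, h1, hρ, Fin.rev_rev]

lemma stmt3' (m : ℕ) (v : Fin (m+1) → Fin 2) :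
    brList K (List.ofFn v) =
      ((-1 : K) ^ m) • ∑ k ∈ Finset.range (m+1), (-1 : K) ^ k •
        ∑ σ ∈ DSet (m+1) k, word K (List.ofFn fun i => v (σ i).rev) := by
  classical
  have hRHS : ((-1 : K) ^ m) • (∑ k ∈ Finset.range (m+1), (-1 : K) ^ k •
        ∑ σ ∈ DSet (m+1) k, word K (List.ofFn fun i => v (σ i).rev))
      = ∑ k ∈ Finset.range (m+1), ∑ σ ∈ DSet (m+1) k,
          ((-1 : K) ^ (m - descNum σ)) • word K (List.ofFn fun i => v (σ i).rev) := by
    rw [Finset.smul_sum]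
    apply Finset.sum_congr rfl
    intro k hk
    rw [smul_smul, Finset.smul_sum]
    apply Finset.sum_congr rfl
    intro σ hσ
    have hds := (Finset.mem_filter.1 hσ).2
    have hdn : descNum σ = k := by rw [descNum, hds, Finset.card_range]
    rw [hdn]
    congr 1
    rw [← pow_add]
    have hk' : k ≤ m := by
      simp only [Finset.mem_range] at hk
      omega
    have h2 : m + k = (m - k) + 2*k := by omega
    rw [h2, pow_add, pow_mul, neg_one_sq, one_pow, mul_one]
  rw [hRHS]
  have hdisj : (↑(Finset.range (m+1)) : Set ℕ).PairwiseDisjoint (DSet (m+1)) := by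
    intro a _ b _ hab
    rw [Function.onFun, Finset.disjoint_left]
    intro σ hσa hσb
    have h1 := (Finset.mem_filter.1 hσa).2
    have h2 := (Finset.mem_filter.1 hσb).2
    apply hab
    have h3 : Finset.range a = Finset.range b := by rw [← h1, ← h2]
    have := congrArg Finset.card h3
    simpa using this
  rw [← Finset.sum_biUnion hdisj, step1]
  apply Finset.sum_bij (i := fun c (_ : c ∈ (Finset.univ : Finset (Fin m → Bool))) => maskPerm m c)
  · intro c _
    rw [Finset.mem_biUnion]
    refine ⟨(trues m c).length, ?_, ?_⟩
    · rw [Finset.mem_range]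
      have := trues_length_le m c
      omega
    · rw [DSet, Finset.mem_filter]
      exact ⟨Finset.mem_univ _, descSet_maskPerm m c⟩
  · intro c₁ _ c₂ _ h
    exact maskPerm_injective m h
  · intro σ hσ
    rw [Finset.mem_biUnion] at hσ
    obtain ⟨k, hk, hσk⟩ := hσ
    rw [Finset.mem_range] at hk
    have hds := (Finset.mem_filter.1 hσk).2
    obtain ⟨c, hc⟩ := maskPerm_surj m σ k (by omega) hds
    exact ⟨c, Finset.mem_univ _, hc⟩
  · intro c _
    have hdn : descNum (maskPerm m c) = (trues m c).length := descNum_maskPerm m c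
    have hf : (falses m c).length = m - descNum (maskPerm m c) := by
      have := trues_add_falses m c
      rw [hdn]
      omega
    rw [hf]
    congr 1
    apply congrArg
    apply List.ext_getElem
    · rw [List.length_map, maskL_length]
      simp
    · intro n h1 h2
      rw [List.getElem_map]
      rw [List.length_map, maskL_length] at h1
      rw [List.getElem_ofFn]
      congr 1
      have h3 : (maskPerm m c ⟨n, by omega⟩).rev = maskEquiv m c ⟨n, by omega⟩ := by
        rw [maskPerm_apply, Fin.rev_rev]
      rw [h3, maskEquiv_apply]

/-- Explicit formula for the Dynkin map in terms of permutations: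
`γ(v₁⋯vₙ) = ((-1)^{n-1}/n) Σ_{k=0}^{n-1} (-1)^k Σ_{σ ∈ D_{1..k}} (vₙ⋯v₁)^σ`. -/
theorem stmt3 (n : ℕ) (hn : 1 ≤ n) (v : Fin n → Fin 2) :
    dynkin K (word K (List.ofFn v)) =
      (((-1 : K) ^ (n - 1)) / (n : K)) •
        ∑ k ∈ Finset.range n, (-1 : K) ^ k •
          ∑ σ ∈ DSet n k, word K (List.ofFn fun i => v (σ i).rev) := by
  obtain ⟨m, rfl⟩ : ∃ m, n = m + 1 := ⟨n - 1, by omega⟩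
  have hdyn : dynkin K (word K (List.ofFn v)) = (((m+1 : ℕ) : K))⁻¹ • brList K (List.ofFn v) := by
    unfold dynkin word
    erw [Finsupp.linearCombination_single]
    rw [one_smul, FreeMonoid.toList_ofList, List.length_ofFn]
  rw [hdyn, stmt3' K m v, smul_smul]
  congr 1
  rw [Nat.add_sub_cancel, div_eq_mul_inv, mul_comm]

end
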